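/- If real numbers b and c each satisfy condition (c), then the product b·c satisfies condition (c). -/

import Mathlib

/-- Condition (c): `b` is a nonnegative real algebraic integer and every complex
root of its minimal polynomial over `ℚ` has modulus at most `b`. -/
def CondC (b : ℝ) : Prop :=
  0 ≤ b ∧ IsIntegral ℤ b ∧
    ∀ z ∈ ((minpoly ℚ b).map (algebraMap ℚ ℂ)).roots, ‖z‖ ≤ b

open IntermediateField Polynomial in
theorem condC_roots_bound (b c : ℝ) (hbi : IsIntegral ℤ b)
    (hbr : ∀ z ∈ ((minpoly ℚ b).map (algebraMap ℚ ℂ)).roots, ‖z‖ ≤ b)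
    (hci : IsIntegral ℤ c)
    (hcr : ∀ z ∈ ((minpoly ℚ c).map (algebraMap ℚ ℂ)).roots, ‖z‖ ≤ c) :
    ∀ z ∈ ((minpoly ℚ (b*c)).map (algebraMap ℚ ℂ)).roots, ‖z‖ ≤ b*c := by
  intro z hz
  have hinj : Function.Injective (algebraMap ℝ ℂ) := (algebraMap ℝ ℂ).injective
  have hbq : IsIntegral ℚ b := hbi.tower_top
  have hcq : IsIntegral ℚ c := hci.tower_top
  have hBi : IsIntegral ℚ ((b:ℂ)) := hbq.map (IsScalarTower.toAlgHom ℚ ℝ ℂ)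
  have hCi : IsIntegral ℚ ((c:ℂ)) := hcq.map (IsScalarTower.toAlgHom ℚ ℝ ℂ)
  have hmin : minpoly ℚ (b*c) = minpoly ℚ ((b:ℂ)*(c:ℂ)) := by
    rw [show (b:ℂ)*(c:ℂ) = algebraMap ℝ ℂ (b*c) from (Complex.ofReal_mul b c).symm,
      minpoly.algebraMap_eq hinj]
  rw [hmin] at hz
  have hy : aeval z (minpoly ℚ ((b:ℂ)*(c:ℂ))) = 0 := by
    have := (mem_roots'.mp hz).2
    rwa [IsRoot.def, eval_map, ← aeval_def] at this
  have hK : ∀ s ∈ ({(b:ℂ), (c:ℂ)} : Set ℂ), IsIntegral ℚ s ∧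
      ((minpoly ℚ s).map (algebraMap ℚ ℂ)).Splits := by
    rintro s hs
    rcases hs with rfl | hs
    · exact ⟨hBi, IsAlgClosed.splits _⟩
    · rcases hs with rfl; exact ⟨hCi, IsAlgClosed.splits _⟩
  have hx : (b:ℂ)*(c:ℂ) ∈ adjoin ℚ ({(b:ℂ), (c:ℂ)} : Set ℂ) :=
    mul_mem (subset_adjoin ℚ _ (by simp)) (subset_adjoin ℚ _ (by simp))
  obtain ⟨ψ, hψ⟩ := exists_algHom_adjoin_of_splits_of_aeval hK hx hy
  have hBL : (b:ℂ) ∈ adjoin ℚ ({(b:ℂ), (c:ℂ)} : Set ℂ) := subset_adjoin ℚ _ (by simp)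
  have hCL : (c:ℂ) ∈ adjoin ℚ ({(b:ℂ), (c:ℂ)} : Set ℂ) := subset_adjoin ℚ _ (by simp)
  have hzval : z = ψ ⟨(b:ℂ), hBL⟩ * ψ ⟨(c:ℂ), hCL⟩ := by
    rw [← map_mul, ← hψ]; congr 1
  have key : ∀ (r : ℝ) (hri : IsIntegral ℚ r)
      (hrL : ((r:ℂ)) ∈ adjoin ℚ ({(b:ℂ), (c:ℂ)} : Set ℂ))
      (hrroots : ∀ w ∈ ((minpoly ℚ r).map (algebraMap ℚ ℂ)).roots, ‖w‖ ≤ r),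
      ‖(ψ ⟨(r:ℂ), hrL⟩)‖ ≤ r := by
    intro r hri hrL hrroots
    apply hrroots
    set rL : adjoin ℚ ({(b:ℂ), (c:ℂ)} : Set ℂ) := ⟨(r:ℂ), hrL⟩ with hrLdef
    have hmr : minpoly ℚ r = minpoly ℚ rL := by
      have e1 : algebraMap _ ℂ rL = algebraMap ℝ ℂ r := rfl
      have h2 := minpoly.algebraMap_eq (A := ℚ)
        (B := ↥(adjoin ℚ ({(b:ℂ), (c:ℂ)} : Set ℂ))) (B' := ℂ) Subtype.val_injective rL
      rw [← h2, e1, minpoly.algebraMap_eq hinj]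
    rw [mem_roots', IsRoot.def, eval_map, ← aeval_def]
    refine ⟨Polynomial.map_monic_ne_zero (minpoly.monic hri), ?_⟩
    rw [hmr, aeval_algHom_apply, minpoly.aeval, map_zero]
  have hb' : ‖(ψ ⟨(b:ℂ), hBL⟩)‖ ≤ b := key b hbq hBL hbr
  have hc' : ‖(ψ ⟨(c:ℂ), hCL⟩)‖ ≤ c := key c hcq hCL hcr
  rw [hzval, norm_mul]
  exact mul_le_mul hb' hc' (by positivity) (le_trans (by positivity) hb')

theorem condC_mul (b c : ℝ) (hb : CondC b) (hc : CondC c) : CondC (b * c) := by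
  obtain ⟨hb0, hbi, hbr⟩ := hb
  obtain ⟨hc0, hci, hcr⟩ := hc
  exact ⟨mul_nonneg hb0 hc0, hbi.mul hci, condC_roots_bound b c hbi hbr hci hcr⟩
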